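/- Let δ be an ordinal, d ≥ 3, and N = 2(d−1). Suppose u₁, …, u_N are distinct nonzero vectors of ℝ^d, and A₁, …, A_N ⊆ ℝ^d satisfy: for all p ∈ ℝ^d and all 1 ≤ i ≤ N, the set H_{u_i}(p) ∩ A_i has cardinality < ℵ_δ. If 2^ℵ₀ > ℵ_δ, then for every ε > 0 there is Z ⊆ (−ε, ε)^d of cardinality ℵ_{δ+1} such that for all p ∈ ℝ^d the translate p + Z is not contained in A₁ ∪ ⋯ ∪ A_N. -/

import Mathlib

open Cardinal

/-- `Hplane u p` is the hyperplane through `p` orthogonal to `u`. -/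
def Hplane {d : ℕ} (u p : EuclideanSpace ℝ (Fin d)) : Set (EuclideanSpace ℝ (Fin d)) :=
  {x | (inner ℝ (x - p) u : ℝ) = 0}

private lemma sum_lt_aux {n : ℕ} {κ : Cardinal.{0}} (hκ : ℵ₀ ≤ κ)
    (f : Fin n → Cardinal.{0}) (hf : ∀ i, f i < κ) : Cardinal.sum f < κ := by
  classical
  have hsup : Finset.univ.sup f < κ :=
    (Finset.sup_lt_iff (lt_of_lt_of_le Cardinal.aleph0_pos hκ)).mpr fun i _ => hf i
  have h1 : Cardinal.sum f ≤ Cardinal.sum (fun _ : Fin n => Finset.univ.sup f) :=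
    Cardinal.sum_le_sum _ _ fun i => Finset.le_sup (Finset.mem_univ i)
  rw [Cardinal.sum_const'] at h1
  refine lt_of_le_of_lt h1 (Cardinal.mul_lt_of_lt hκ ?_ hsup)
  exact lt_of_lt_of_le (Cardinal.lt_aleph0_of_finite (Fin n)) hκ

private lemma coord_le_norm {d : ℕ} (v : EuclideanSpace ℝ (Fin d)) (j : Fin d) :
    |v j| ≤ ‖v‖ := by
  rw [EuclideanSpace.norm_eq]
  have h1 : |v j| = Real.sqrt (‖v j‖ ^ 2) := by
    rw [Real.sqrt_sq_eq_abs]; simp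
  rw [h1]
  apply Real.sqrt_le_sqrt
  exact Finset.single_le_sum (f := fun i => ‖v i‖ ^ 2)
    (fun i _ => sq_nonneg _) (Finset.mem_univ j)

private lemma exists_good_pair (d : ℕ) (hd : 3 ≤ d)
    (u : Fin (2 * (d - 1)) → EuclideanSpace ℝ (Fin d)) :
    ∃ v₁ v₂ : EuclideanSpace ℝ (Fin d),
      (∀ a b : ℝ, a • v₁ + b • v₂ = 0 → a = 0 ∧ b = 0) ∧
      ∀ i, (inner ℝ v₁ (u i) : ℝ) = 0 ∨ (inner ℝ v₂ (u i) : ℝ) = 0 := by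
  classical
  have hdim : Module.finrank ℝ (EuclideanSpace ℝ (Fin d)) = d := finrank_euclideanSpace_fin
  have hNd : d - 1 ≤ 2 * (d - 1) := by omega
  set g₁ : Fin (d - 1) → EuclideanSpace ℝ (Fin d) := fun j => u (Fin.castLE hNd j) with hg₁
  set g₂ : Fin (d - 1) → EuclideanSpace ℝ (Fin d) :=
    fun j => u ⟨d - 1 + j.1, by omega⟩ with hg₂
  set S₁ : Submodule ℝ (EuclideanSpace ℝ (Fin d)) := Submodule.span ℝ (Set.range g₁) with hS₁
  set S₂ : Submodule ℝ (EuclideanSpace ℝ (Fin d)) := Submodule.span ℝ (Set.range g₂) with hS₂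
  have hcard : ∀ g : Fin (d - 1) → EuclideanSpace ℝ (Fin d),
      Submodule.span ℝ (Set.range g) ≠ ⊤ := by
    intro g hTop
    have := finrank_le_of_span_eq_top hTop
    simp [hdim] at this
    omega
  have hperp_ne : ∀ g : Fin (d - 1) → EuclideanSpace ℝ (Fin d),
      (Submodule.span ℝ (Set.range g))ᗮ ≠ ⊥ := by
    intro g hbot
    exact hcard g (Submodule.orthogonal_eq_bot_iff.mp hbot)
  have hmem : ∀ i, u i ∈ S₁ ∨ u i ∈ S₂ := by
    intro i
    by_cases h : (i : ℕ) < d - 1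
    · left
      apply Submodule.subset_span
      exact ⟨⟨i, h⟩, by simp [hg₁, Fin.castLE]⟩
    · right
      apply Submodule.subset_span
      refine ⟨⟨(i : ℕ) - (d - 1), by omega⟩, ?_⟩
      simp only [hg₂]
      exact congrArg u (Fin.ext (by show d - 1 + ((i : ℕ) - (d - 1)) = i; omega))
  by_cases hT : S₁ᗮ ⊓ S₂ᗮ = ⊥
  · obtain ⟨v₁, hv₁, hv₁0⟩ := Submodule.exists_mem_ne_zero_of_ne_bot (hperp_ne g₁)
    obtain ⟨v₂, hv₂, hv₂0⟩ := Submodule.exists_mem_ne_zero_of_ne_bot (hperp_ne g₂)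
    refine ⟨v₁, v₂, ?_, ?_⟩
    · intro a b hab
      by_cases hb : b = 0
      · subst hb
        simp at hab
        rcases hab with h | h
        · exact ⟨h, rfl⟩
        · exact absurd h hv₁0
      · exfalso
        have hbv : b • v₂ = (-a) • v₁ := by
          linear_combination (norm := module) hab
        have hveq : v₂ = (b⁻¹ * -a) • v₁ := by
          rw [mul_smul, ← hbv, inv_smul_smul₀ hb]
        have h2 : v₂ ∈ S₁ᗮ := hveq ▸ Submodule.smul_mem _ _ hv₁
        have : v₂ ∈ S₁ᗮ ⊓ S₂ᗮ := ⟨h2, hv₂⟩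
        rw [hT] at this
        exact hv₂0 this
    · intro i
      rcases hmem i with h | h
      · left; rw [real_inner_comm]; exact (Submodule.mem_orthogonal _ _).mp hv₁ _ h
      · right; rw [real_inner_comm]; exact (Submodule.mem_orthogonal _ _).mp hv₂ _ h
  · obtain ⟨v₁, hv₁, hv₁0⟩ := Submodule.exists_mem_ne_zero_of_ne_bot hT
    have hspan : Submodule.span ℝ ({v₁} : Set (EuclideanSpace ℝ (Fin d))) ≠ ⊤ := by
      intro htop
      have h1 := finrank_span_singleton (K := ℝ) hv₁0
      rw [htop, finrank_top, hdim] at h1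
      omega
    have : ∃ v₂, v₂ ∉ Submodule.span ℝ ({v₁} : Set (EuclideanSpace ℝ (Fin d))) := by
      by_contra h
      push_neg at h
      exact hspan (Submodule.eq_top_iff'.mpr h)
    obtain ⟨v₂, hv₂⟩ := this
    refine ⟨v₁, v₂, ?_, ?_⟩
    · intro a b hab
      by_cases hb : b = 0
      · subst hb
        simp at hab
        rcases hab with h | h
        · exact ⟨h, rfl⟩
        · exact absurd h hv₁0
      · exfalso
        apply hv₂
        have hbv : b • v₂ = (-a) • v₁ := by
          linear_combination (norm := module) hab
        have hveq : v₂ = (b⁻¹ * -a) • v₁ := by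
          rw [mul_smul, ← hbv, inv_smul_smul₀ hb]
        rw [Submodule.mem_span_singleton]
        exact ⟨b⁻¹ * -a, hveq.symm⟩
    · intro i
      left
      rw [real_inner_comm]
      rcases hmem i with h | h
      · exact (Submodule.mem_orthogonal _ _).mp hv₁.1 _ h
      · exact (Submodule.mem_orthogonal _ _).mp hv₁.2 _ h

set_option maxHeartbeats 1000000 in
theorem stmt10 (δ : Ordinal) (d : ℕ) (hd : 3 ≤ d)
    (u : Fin (2 * (d - 1)) → EuclideanSpace ℝ (Fin d))
    (hu : ∀ i, u i ≠ 0) (huinj : Function.Injective u)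
    (A : Fin (2 * (d - 1)) → Set (EuclideanSpace ℝ (Fin d)))
    (hA : ∀ (p : EuclideanSpace ℝ (Fin d)) (i : Fin (2 * (d - 1))),
      Cardinal.mk (Hplane (u i) p ∩ A i : Set (EuclideanSpace ℝ (Fin d))) < aleph δ)
    (hcont : aleph δ < continuum) :
    ∀ ε : ℝ, 0 < ε →
      ∃ Z : Set (EuclideanSpace ℝ (Fin d)),
        (∀ z ∈ Z, ∀ i, |z i| < ε) ∧
        Cardinal.mk Z = aleph (δ + 1) ∧
        ∀ p : EuclideanSpace ℝ (Fin d), ¬ (p + ·) '' Z ⊆ ⋃ i, A i := by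
  classical
  intro ε hε
  obtain ⟨v₁, v₂, hind, hperp⟩ := exists_good_pair d hd u
  have hv₁0 : v₁ ≠ 0 := by
    intro h
    have := (hind 1 0 (by simp [h])).1
    norm_num at this
  have hv₂0 : v₂ ≠ 0 := by
    intro h
    have := (hind 0 1 (by simp [h])).2
    norm_num at this
  set s : ℝ := ‖v₁‖ + ‖v₂‖ with hs
  have hs0 : 0 ≤ s := by positivity
  set c : ℝ := ε / (s + 1) with hc
  have hc0 : 0 < c := div_pos hε (by linarith)
  set w₁ : EuclideanSpace ℝ (Fin d) := c • v₁ with hw₁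
  set w₂ : EuclideanSpace ℝ (Fin d) := c • v₂ with hw₂
  have hindw : ∀ a b : ℝ, a • w₁ + b • w₂ = 0 → a = 0 ∧ b = 0 := by
    intro a b hab
    have h := hind (a * c) (b * c) (by rw [mul_smul, mul_smul]; exact hab)
    constructor
    · exact (mul_eq_zero.mp h.1).resolve_right hc0.ne'
    · exact (mul_eq_zero.mp h.2).resolve_right hc0.ne'
  have hperpw : ∀ i, (inner ℝ w₁ (u i) : ℝ) = 0 ∨ (inner ℝ w₂ (u i) : ℝ) = 0 := by
    intro i
    rcases hperp i with h | h
    · left; rw [hw₁, real_inner_smul_left, h, mul_zero]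
    · right; rw [hw₂, real_inner_smul_left, h, mul_zero]
  have hw₁0 : w₁ ≠ 0 := by
    intro h
    have := (hindw 1 0 (by simp [h])).1
    norm_num at this
  -- choose X and Y
  have hIoo : #(Set.Ioo (0:ℝ) 1) = continuum := Cardinal.mk_Ioo_real (by norm_num)
  have hsucc : aleph (δ + 1) = Order.succ (aleph δ) := by
    rw [Ordinal.add_one_eq_succ, aleph_succ]
  have hX' : aleph (δ + 1) ≤ #(Set.Ioo (0:ℝ) 1) := by
    rw [hIoo, hsucc]
    exact Order.succ_le_of_lt hcont
  obtain ⟨X, hXsub, hXcard⟩ := Cardinal.le_mk_iff_exists_subset.mp hX'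
  have hY' : aleph δ ≤ #(Set.Ioo (0:ℝ) 1) := by rw [hIoo]; exact hcont.le
  obtain ⟨Y, hYsub, hYcard⟩ := Cardinal.le_mk_iff_exists_subset.mp hY'
  set f : ℝ × ℝ → EuclideanSpace ℝ (Fin d) := fun q => q.1 • w₁ + q.2 • w₂ with hf
  have hfinj : Function.Injective f := by
    intro q r h
    have h0 : (q.1 - r.1) • w₁ + (q.2 - r.2) • w₂ = 0 := by
      simp only [hf] at h
      linear_combination (norm := module) h
    obtain ⟨h1, h2⟩ := hindw _ _ h0
    exact Prod.ext (by linarith [sub_eq_zero.mp h1]) (by linarith [sub_eq_zero.mp h2])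
  refine ⟨f '' (X ×ˢ Y), ?_, ?_, ?_⟩
  · -- inside the cube
    rintro z ⟨⟨x, y⟩, hxy, rfl⟩ j
    obtain ⟨hx01, hy01⟩ : x ∈ Set.Ioo (0:ℝ) 1 ∧ y ∈ Set.Ioo (0:ℝ) 1 :=
      ⟨hXsub hxy.1, hYsub hxy.2⟩
    have hfz : f (x, y) j = x * (c * v₁ j) + y * (c * v₂ j) := by
      simp [hf, hw₁, hw₂]
    rw [hfz]
    have hb1 : |v₁ j| ≤ ‖v₁‖ := coord_le_norm v₁ j
    have hb2 : |v₂ j| ≤ ‖v₂‖ := coord_le_norm v₂ j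
    have habs : |x * (c * v₁ j) + y * (c * v₂ j)| ≤
        |x| * (c * |v₁ j|) + |y| * (c * |v₂ j|) := by
      refine (abs_add_le _ _).trans ?_
      rw [abs_mul, abs_mul, abs_mul, abs_mul, abs_of_pos hc0]
    have hx1 : |x| ≤ 1 := by rw [abs_of_pos hx01.1]; exact hx01.2.le
    have hy1 : |y| ≤ 1 := by rw [abs_of_pos hy01.1]; exact hy01.2.le
    have hcs : c * s < ε := by
      rw [hc, div_mul_eq_mul_div, div_lt_iff₀ (by linarith)]
      nlinarith
    have h2 : |x| * (c * |v₁ j|) + |y| * (c * |v₂ j|) ≤ c * s := by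
      have e1 : |x| * (c * |v₁ j|) ≤ c * |v₁ j| :=
        mul_le_of_le_one_left (by positivity) hx1
      have e2 : |y| * (c * |v₂ j|) ≤ c * |v₂ j| :=
        mul_le_of_le_one_left (by positivity) hy1
      have e3 : c * |v₁ j| + c * |v₂ j| ≤ c * s := by nlinarith
      linarith
    linarith [habs.trans h2]
  · -- cardinality
    rw [Cardinal.mk_image_eq_of_injOn f _ hfinj.injOn]
    rw [Cardinal.mk_congr (Equiv.Set.prod X Y), Cardinal.mk_prod, Cardinal.lift_id,
      Cardinal.lift_id, hXcard, hYcard,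
      Cardinal.mul_eq_max (aleph0_le_aleph _) (aleph0_le_aleph _),
      max_eq_left (aleph_le_aleph.mpr le_self_add)]
  · -- main part
    intro p hcov
    have hmem : ∀ (x : X) (y : Y), ∃ i, p + f (x.1, y.1) ∈ A i := by
      intro x y
      have h1 : f (x.1, y.1) ∈ f '' (X ×ˢ Y) :=
        Set.mem_image_of_mem f (Set.mk_mem_prod x.2 y.2)
      exact Set.mem_iUnion.mp (hcov (Set.mem_image_of_mem _ h1))
    choose I hI using hmem
    -- Claim A: for each x, some y gives a direction orthogonal to w₁
    have claimA : ∀ x : X, ∃ y : Y, (inner ℝ w₁ (u (I x y)) : ℝ) = 0 := by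
      by_contra hcon
      push_neg at hcon
      obtain ⟨x, hx⟩ := hcon
      have hw2 : ∀ y : Y, (inner ℝ w₂ (u (I x y)) : ℝ) = 0 :=
        fun y => (hperpw _).resolve_left (hx y)
      have key : ∀ i, #{y : Y // I x y = i} < aleph δ := by
        intro i
        refine lt_of_le_of_lt ?_ (hA (p + (x : ℝ) • w₁) i)
        have hmap : ∀ y : {y : Y // I x y = i},
            p + f ((x : ℝ), (y.1 : ℝ)) ∈ Hplane (u i) (p + (x : ℝ) • w₁) ∩ A i := by
          intro y
          constructor
          · show (inner ℝ ((p + f ((x : ℝ), (y.1 : ℝ))) - (p + (x : ℝ) • w₁)) (u i) : ℝ) = 0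
            have hdiff : (p + f ((x : ℝ), (y.1 : ℝ))) - (p + (x : ℝ) • w₁)
                = (y.1 : ℝ) • w₂ := by
              simp only [hf]
              module
            have hz := hw2 y.1
            rw [y.2] at hz
            rw [hdiff, real_inner_smul_left, hz, mul_zero]
          · have hz := hI x y.1
            rw [y.2] at hz
            exact hz
        refine Cardinal.mk_le_of_injective
          (f := fun y => (⟨p + f ((x : ℝ), (y.1 : ℝ)), hmap y⟩ :
            ↥(Hplane (u i) (p + (x : ℝ) • w₁) ∩ A i))) ?_
        intro y₁ y₂ h
        have h' : p + f ((x : ℝ), (y₁.1 : ℝ)) = p + f ((x : ℝ), (y₂.1 : ℝ)) :=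
          congrArg Subtype.val h
        have h'' := hfinj (add_left_cancel h')
        have : (y₁.1 : ℝ) = (y₂.1 : ℝ) := congrArg Prod.snd h''
        exact Subtype.ext (Subtype.ext this)
      have hYeq : #Y = Cardinal.sum (fun i => #{y : Y // I x y = i}) := by
        rw [← Cardinal.mk_sigma]
        exact Cardinal.mk_congr (Equiv.sigmaFiberEquiv (fun y : Y => I x y)).symm
      have hlt : #Y < aleph δ := hYeq ▸ sum_lt_aux (aleph0_le_aleph δ) _ key
      rw [hYcard] at hlt
      exact lt_irrefl _ hlt
    choose g hg using claimA
    set F : X → Fin (2 * (d - 1)) × Y := fun x => (I x (g x), g x) with hF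
    have hFib : ∃ b, aleph δ ≤ #{x : X // F x = b} := by
      by_contra hcon
      push_neg at hcon
      have h1 : #X = Cardinal.sum (fun b => #{x : X // F x = b}) := by
        rw [← Cardinal.mk_sigma]
        exact Cardinal.mk_congr (Equiv.sigmaFiberEquiv F).symm
      have h2 : Cardinal.sum (fun b => #{x : X // F x = b}) ≤
          Cardinal.sum (fun _ : Fin (2 * (d - 1)) × Y => aleph δ) :=
        Cardinal.sum_le_sum _ _ fun b => (hcon b).le
      rw [Cardinal.sum_const'] at h2
      have hfin : #(Fin (2 * (d - 1)) × Y) ≤ aleph δ := by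
        rw [Cardinal.mk_prod, Cardinal.lift_id, Cardinal.lift_id, hYcard]
        calc #(Fin (2 * (d - 1))) * aleph δ ≤ aleph δ * aleph δ :=
              mul_le_mul' ((Cardinal.lt_aleph0_of_finite (Fin (2 * (d - 1)))).le.trans (aleph0_le_aleph δ)) le_rfl
          _ = aleph δ := Cardinal.mul_eq_self (aleph0_le_aleph δ)
      have h3 : #X ≤ aleph δ := by
        rw [h1]
        refine h2.trans ?_
        calc #(Fin (2 * (d - 1)) × Y) * aleph δ ≤ aleph δ * aleph δ :=
              mul_le_mul' hfin le_rfl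
          _ = aleph δ := Cardinal.mul_eq_self (aleph0_le_aleph δ)
      rw [hXcard] at h3
      have hlt : aleph δ < aleph (δ + 1) := by
        rw [hsucc]
        exact Order.lt_succ _
      exact absurd h3 (not_le.mpr hlt)
    obtain ⟨⟨i₀, y₀⟩, hb⟩ := hFib
    have hne : Nonempty {x : X // F x = (i₀, y₀)} := by
      rw [← Cardinal.mk_ne_zero_iff]
      intro h0
      rw [h0] at hb
      exact absurd hb (not_le.mpr (lt_of_lt_of_le Cardinal.aleph0_pos (aleph0_le_aleph δ)))
    obtain ⟨xw⟩ := hne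
    have hIi₀ : I xw.1 (g xw.1) = i₀ := congrArg Prod.fst xw.2
    have hgy₀ : g xw.1 = y₀ := congrArg Prod.snd xw.2
    have hperp0 : (inner ℝ w₁ (u i₀) : ℝ) = 0 := by
      have := hg xw.1
      rw [hIi₀] at this
      exact this
    have key2 : #{x : X // F x = (i₀, y₀)} ≤
        #(Hplane (u i₀) (p + (y₀ : ℝ) • w₂) ∩ A i₀ : Set (EuclideanSpace ℝ (Fin d))) := by
      have hmap : ∀ x : {x : X // F x = (i₀, y₀)},
          p + f ((x.1 : ℝ), (y₀ : ℝ)) ∈ Hplane (u i₀) (p + (y₀ : ℝ) • w₂) ∩ A i₀ := by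
        intro x
        have hIx : I x.1 (g x.1) = i₀ := congrArg Prod.fst x.2
        have hgx : g x.1 = y₀ := congrArg Prod.snd x.2
        constructor
        · show (inner ℝ ((p + f ((x.1 : ℝ), (y₀ : ℝ))) - (p + (y₀ : ℝ) • w₂)) (u i₀) : ℝ) = 0
          have hdiff : (p + f ((x.1 : ℝ), (y₀ : ℝ))) - (p + (y₀ : ℝ) • w₂)
              = (x.1 : ℝ) • w₁ := by
            simp only [hf]
            module
          rw [hdiff, real_inner_smul_left, hperp0, mul_zero]
        · have hz := hI x.1 (g x.1)
          rw [hIx, hgx] at hz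
          exact hz
      refine Cardinal.mk_le_of_injective
        (f := fun x => (⟨p + f ((x.1 : ℝ), (y₀ : ℝ)), hmap x⟩ :
          ↥(Hplane (u i₀) (p + (y₀ : ℝ) • w₂) ∩ A i₀))) ?_
      intro x₁ x₂ h
      have h' : p + f ((x₁.1 : ℝ), (y₀ : ℝ)) = p + f ((x₂.1 : ℝ), (y₀ : ℝ)) :=
        congrArg Subtype.val h
      have h'' := hfinj (add_left_cancel h')
      have : (x₁.1 : ℝ) = (x₂.1 : ℝ) := congrArg Prod.fst h''
      exact Subtype.ext (Subtype.ext this)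
    exact absurd (hb.trans key2) (not_le.mpr (hA (p + (y₀ : ℝ) • w₂) i₀))
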